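/- Let n ≥ 1, let σ : Fin n → Fin n → ℝ be a conductivity matrix whose support graph is connected, and let B ⊆ Fin n be nonempty. If v : Fin n → ℝ satisfies ∑_j σ_{ij}·(v_i − v_j) = 0 for every i ∉ B and v_i = 0 for every i ∈ B, then v = 0. (Equivalently, the Dirichlet forward problem has at most one solution, i.e., the matrix A_D is non-singular.) -/

import Mathlib

/-- Uniqueness for the Dirichlet forward problem: a solution of the Kirchhoff
equations vanishing on a nonempty boundary set vanishes everywhere
(i.e. the matrix `A_D` is non-singular). -/
theorem dirichlet_forward_uniqueness
    (n : ℕ) (hn : 1 ≤ n) (σ : Fin n → Fin n → ℝ)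
    (hσsymm : ∀ i j, σ i j = σ j i) (hσnonneg : ∀ i j, 0 ≤ σ i j)
    (hσdiag : ∀ i, σ i i = 0)
    (hconn : (SimpleGraph.fromRel (fun i j => 0 < σ i j)).Connected)
    (B : Set (Fin n)) (hB : B.Nonempty) (v : Fin n → ℝ)
    (hK : ∀ i, i ∉ B → ∑ j, σ i j * (v i - v j) = 0)
    (hv0 : ∀ i ∈ B, v i = 0) :
    ∀ i, v i = 0 := by
  have h1 : ∑ i, ∑ j, σ i j * (v i - v j) * v i = 0 := by
    apply Finset.sum_eq_zero; intro i _
    have : ∑ j, σ i j * (v i - v j) * v i = (∑ j, σ i j * (v i - v j)) * v i :=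
      (Finset.sum_mul _ _ _).symm
    rw [this]
    by_cases hi : i ∈ B
    · rw [hv0 i hi, mul_zero]
    · rw [hK i hi, zero_mul]
  have h2 : ∑ i, ∑ j, σ i j * (v i - v j) * v j = 0 := by
    rw [Finset.sum_comm]
    apply Finset.sum_eq_zero; intro j _
    have : ∑ i, σ i j * (v i - v j) * v j
        = -((∑ i, σ j i * (v j - v i)) * v j) := by
      rw [Finset.sum_mul, ← Finset.sum_neg_distrib]
      exact Finset.sum_congr rfl fun i _ => by rw [hσsymm i j]; ring
    rw [this]
    by_cases hj : j ∈ B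
    · rw [hv0 j hj, mul_zero, neg_zero]
    · rw [hK j hj, zero_mul, neg_zero]
  have hS : ∑ i, ∑ j, σ i j * (v i - v j) ^ 2 = 0 := by
    have key : ∀ i j : Fin n, σ i j * (v i - v j) ^ 2
        = σ i j * (v i - v j) * v i - σ i j * (v i - v j) * v j := fun i j => by ring
    calc ∑ i, ∑ j, σ i j * (v i - v j) ^ 2
        = ∑ i, ∑ j, (σ i j * (v i - v j) * v i - σ i j * (v i - v j) * v j) :=
          Finset.sum_congr rfl fun i _ => Finset.sum_congr rfl fun j _ => key i j
      _ = (∑ i, ∑ j, σ i j * (v i - v j) * v i)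
          - ∑ i, ∑ j, σ i j * (v i - v j) * v j := by
          rw [← Finset.sum_sub_distrib]
          exact Finset.sum_congr rfl fun i _ => Finset.sum_sub_distrib _ _
      _ = 0 := by rw [h1, h2, sub_zero]
  have hterm : ∀ i j : Fin n, σ i j * (v i - v j) ^ 2 = 0 := by
    have houter := (Finset.sum_eq_zero_iff_of_nonneg (fun i _ =>
      Finset.sum_nonneg fun j _ =>
        mul_nonneg (hσnonneg i j) (sq_nonneg _))).mp hS
    intro i j
    have hinner := (Finset.sum_eq_zero_iff_of_nonneg (fun j _ =>
      mul_nonneg (hσnonneg i j) (sq_nonneg _))).mp (houter i (Finset.mem_univ i))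
    exact hinner j (Finset.mem_univ j)
  have hedge : ∀ i j : Fin n, 0 < σ i j → v i = v j := by
    intro i j hij
    have ht := hterm i j
    have hsq : (v i - v j) ^ 2 = 0 := by
      rcases mul_eq_zero.mp ht with h | h
      · exact absurd h (ne_of_gt hij)
      · exact h
    have := pow_eq_zero_iff (n := 2) (by norm_num) |>.mp hsq
    linarith [sub_eq_zero.mp this]
  have hwalk : ∀ a c : Fin n,
      (SimpleGraph.fromRel fun i j => 0 < σ i j).Walk a c → v a = v c := by
    intro a c w
    induction w with
    | nil => rfl
    | cons h p ih =>
      rw [SimpleGraph.fromRel_adj] at h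
      rcases h.2 with hc | hc
      · exact (hedge _ _ hc).trans ih
      · exact ((hedge _ _ hc).symm).trans ih
  intro i
  obtain ⟨b, hb⟩ := hB
  obtain ⟨w⟩ := hconn.preconnected i b
  rw [hwalk i b w, hv0 b hb]
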